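/- For every colouring χ: ℕ → C of the natural numbers with an arbitrary (possibly infinite) set C of colours and every k ∈ ℕ, there exist a ∈ ℕ and d > 0 such that the arithmetic progression a, a+d, ..., a+(k-1)d is either monochromatic (χ takes the same value on all its terms) or rainbow (χ takes pairwise distinct values on its terms). In particular, any such colouring contains either arbitrarily long monochromatic arithmetic progressions or arbitrarily long rainbow arithmetic progressions. -/
import Mathlib

private lemma canonical_vdw_aux {C : Type*} (χ : ℕ → C) (k : ℕ) :
    ∃ a d : ℕ, 0 < d ∧
      ((∀ i j : Fin k, χ (a + i * d) = χ (a + j * d)) ∨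
       Function.Injective fun i : Fin k => χ (a + i * d)) := by
  classical
  rcases le_or_gt k 1 with hk | hk
  · refine ⟨0, 1, one_pos, Or.inl ?_⟩
    intro i j
    have : i = j := Fin.ext (by omega)
    rw [this]
  · set M0 : ℕ := k * k with hM0
    set Col : ℕ × ℕ → Finset (Fin k × Fin k) :=
      fun p => Finset.univ.filter
        (fun q => χ (p.1 + q.1.val * p.2) = χ (p.1 + q.2.val * p.2)) with hCol
    set S : Finset (ℕ × ℕ) :=
      (Finset.range k ×ˢ Finset.range k).image (fun p => (M0 - p.1 * p.2, p.2)) with hS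
    obtain ⟨a, ha, b, c, hc⟩ := Combinatorics.exists_mono_homothetic_copy S Col
    have hmem : ∀ v s : ℕ, v < k → s < k → (M0 - v * s, s) ∈ S := by
      intro v s hv hs
      rw [hS, Finset.mem_image]
      exact ⟨(v, s), by simp [Finset.mem_product, hv, hs], rfl⟩
    have key : ∀ v s : ℕ, v < k → s < k → ∀ i j : Fin k,
        ((i, j) ∈ c ↔
          χ (a * (M0 - v * s) + b.1 + i.val * (a * s + b.2)) =
          χ (a * (M0 - v * s) + b.1 + j.val * (a * s + b.2))) := by
      intro v s hv hs i j
      rw [← hc _ (hmem v s hv hs)]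
      simp [hCol, Prod.smul_mk, smul_eq_mul, Prod.mk_add_mk]
    by_cases hE : ∃ i j : Fin k, (i, j) ∈ c ∧ (i : ℕ) < (j : ℕ)
    · -- monochromatic case
      obtain ⟨i, j, hmemc, hij⟩ := hE
      set u : ℕ := i.val with hu
      set v : ℕ := j.val with hv
      set w : ℕ := v - u with hw
      have hvk : v < k := j.isLt
      have hwk : w ≤ k - 1 := by omega
      have H2 : ∀ s : ℕ, s < k →
          χ (b.1 + u * b.2 + a * (M0 - w * s)) = χ (a * M0 + b.1 + v * b.2) := by
        intro s hs
        have h1 := (key v s hvk hs i j).mp hmemc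
        have hPM : v * s ≤ M0 := by
          calc v * s ≤ (k-1) * (k-1) := Nat.mul_le_mul (by omega) (by omega)
          _ ≤ M0 := by rw [hM0]; exact Nat.mul_le_mul (by omega) (by omega)
        have hQP : u * s ≤ v * s := Nat.mul_le_mul (by omega) le_rfl
        have e1 : a * (M0 - v * s) + b.1 + u * (a * s + b.2)
            = b.1 + u * b.2 + a * (M0 - w * s) := by
          have hws : w * s = v * s - u * s := by rw [hw, Nat.sub_mul]
          have h2 : M0 - v * s + u * s = M0 - w * s := by omega
          calc a * (M0 - v * s) + b.1 + u * (a * s + b.2)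
              = b.1 + u * b.2 + (a * (M0 - v * s) + a * (u * s)) := by ring
            _ = b.1 + u * b.2 + a * (M0 - v * s + u * s) := by rw [Nat.mul_add]
            _ = b.1 + u * b.2 + a * (M0 - w * s) := by rw [h2]
        have e2 : a * (M0 - v * s) + b.1 + v * (a * s + b.2)
            = a * M0 + b.1 + v * b.2 := by
          have h2 : M0 - v * s + v * s = M0 := by omega
          calc a * (M0 - v * s) + b.1 + v * (a * s + b.2)
              = a * (M0 - v * s) + a * (v * s) + b.1 + v * b.2 := by ring
            _ = a * (M0 - v * s + v * s) + b.1 + v * b.2 := by rw [Nat.mul_add]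
            _ = a * M0 + b.1 + v * b.2 := by rw [h2]
        rw [e1, e2] at h1
        exact h1
      refine ⟨b.1 + u * b.2 + a * (M0 - w * (k - 1)), a * w,
        Nat.mul_pos ha (by omega), Or.inl ?_⟩
      have main : ∀ i' : Fin k,
          χ (b.1 + u * b.2 + a * (M0 - w * (k - 1)) + i'.val * (a * w))
            = χ (a * M0 + b.1 + v * b.2) := by
        intro i'
        set s : ℕ := k - 1 - i'.val with hs
        have hsk : s < k := by omega
        have hsplit : w * (k - 1) = w * s + w * i'.val := by
          rw [← Nat.mul_add]; congr 1; omega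
        have hbound : w * (k - 1) ≤ M0 := by
          calc w * (k-1) ≤ (k-1) * (k-1) := Nat.mul_le_mul hwk le_rfl
          _ ≤ M0 := by rw [hM0]; exact Nat.mul_le_mul (by omega) (by omega)
        have h2 : M0 - w * (k - 1) + w * i'.val = M0 - w * s := by omega
        have e : b.1 + u * b.2 + a * (M0 - w * (k - 1)) + i'.val * (a * w)
            = b.1 + u * b.2 + a * (M0 - w * s) := by
          calc b.1 + u * b.2 + a * (M0 - w * (k - 1)) + i'.val * (a * w)
              = b.1 + u * b.2 + (a * (M0 - w * (k - 1)) + a * (w * i'.val)) := by ring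
            _ = b.1 + u * b.2 + a * (M0 - w * (k - 1) + w * i'.val) := by rw [Nat.mul_add]
            _ = b.1 + u * b.2 + a * (M0 - w * s) := by rw [h2]
        rw [e]
        exact H2 s hsk
      intro i' j'
      rw [main i', main j']
    · -- rainbow case
      push_neg at hE
      refine ⟨a * (M0 - 1 * 1) + b.1, a * 1 + b.2, by omega, Or.inr ?_⟩
      intro i j hij
      simp only at hij
      rcases lt_trichotomy (i : ℕ) (j : ℕ) with h | h | h
      · have := hE i j ((key 1 1 (by omega) (by omega) i j).mpr hij); exact absurd h (by omega)
      · exact Fin.ext h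
      · have := hE j i ((key 1 1 (by omega) (by omega) j i).mpr hij.symm); exact absurd h (by omega)

/-- **Canonical Van der Waerden theorem (Erdős–Graham).**
For every colouring `χ : ℕ → C` with an arbitrary (possibly infinite) set of
colours and every `k`, there exist `a` and `d > 0` such that the arithmetic
progression `a, a + d, ..., a + (k-1)d` is either monochromatic or rainbow.
In particular, any such colouring contains either arbitrarily long
monochromatic arithmetic progressions or arbitrarily long rainbow arithmetic
progressions. -/
theorem canonical_vdw {C : Type*} (χ : ℕ → C) :
    (∀ k : ℕ, ∃ a d : ℕ, 0 < d ∧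
      ((∀ i j : Fin k, χ (a + i * d) = χ (a + j * d)) ∨
       Function.Injective fun i : Fin k => χ (a + i * d))) ∧
    ((∀ k : ℕ, ∃ a d : ℕ, 0 < d ∧ ∀ i j : Fin k, χ (a + i * d) = χ (a + j * d)) ∨
     (∀ k : ℕ, ∃ a d : ℕ, 0 < d ∧ Function.Injective fun i : Fin k => χ (a + i * d))) := by
  classical
  refine ⟨fun k => canonical_vdw_aux χ k, ?_⟩
  by_cases hP : ∀ k : ℕ, ∃ a d : ℕ, 0 < d ∧ ∀ i j : Fin k, χ (a + i * d) = χ (a + j * d)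
  · exact Or.inl hP
  · push_neg at hP
    obtain ⟨k₀, hk₀⟩ := hP
    refine Or.inr fun k => ?_
    obtain ⟨a, d, hd, h⟩ := canonical_vdw_aux χ (max k k₀)
    rcases h with hmono | hrain
    · obtain ⟨i, j, hne⟩ := hk₀ a d hd
      have hmono' :=
        hmono (Fin.castLE (le_max_right k k₀) i) (Fin.castLE (le_max_right k k₀) j)
      exact absurd (by simpa using hmono') hne
    · refine ⟨a, d, hd, fun i j hij => ?_⟩
      have h3 : Fin.castLE (le_max_left k k₀) i = Fin.castLE (le_max_left k k₀) j :=
        hrain (by simpa using hij)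
      exact Fin.ext (by simpa using congrArg Fin.val h3)
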